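/- arXiv:1402.3660 — 5 statements merged into one kernel-verified Lean document; each statement's English description precedes it below -/
import Mathlib

section
/- Let (c_{ij})_{1≤i,j≤n} be an array of real numbers and let π be a uniform random permutation of [n]. Set W = ∑_{i=1}^n c_{i,π(i)}. Then Var(W) = (1/(n-1)) ∑_{i,j=1}^n (c_{ij} - r_i - s_j + m)², where r_i = (1/n)∑_k c_{ik}, s_j = (1/n)∑_k c_{kj}, and m = (1/n²)∑_{k,l} c_{kl}. -/
open Finset

section helpers
open Equiv

private lemma sum_sq_sub' {α : Type*} (s : Finset α) (f : α → ℝ) (K : ℝ) :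
    ∑ x ∈ s, (f x - K)^2 = (∑ x ∈ s, (f x)^2) - 2*K*(∑ x ∈ s, f x) + s.card * K^2 := by
  have h : ∀ x ∈ s, (f x - K)^2 = (f x)^2 - 2*K*(f x) + K^2 := fun x _ => by ring
  rw [Finset.sum_congr rfl h, Finset.sum_add_distrib, Finset.sum_sub_distrib,
    ← Finset.mul_sum, Finset.sum_const, nsmul_eq_mul]

private lemma sum_perm_zero (m : ℕ) (f : Fin (m+2) → ℝ) :
    ∑ π : Perm (Fin (m+2)), f (π 0) = (Nat.factorial (m+1) : ℝ) * ∑ j, f j := by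
  rw [← Equiv.sum_comp (Equiv.Perm.decomposeFin (n := m+1)).symm (fun π => f (π 0))]
  simp [Fintype.sum_prod_type, Equiv.Perm.decomposeFin_symm_apply_zero, Finset.sum_const,
    Fintype.card_perm, Fintype.card_fin]
  rw [← Finset.mul_sum]

private lemma sum_perm_single (m : ℕ) (f : Fin (m+2) → ℝ) (i : Fin (m+2)) :
    ∑ π : Perm (Fin (m+2)), f (π i) = (Nat.factorial (m+1) : ℝ) * ∑ j, f j := by
  rw [← sum_perm_zero m f]
  rw [← Equiv.sum_comp (Equiv.mulRight (Equiv.swap 0 i)) (fun π => f (π 0))]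
  apply Finset.sum_congr rfl
  intro π _
  simp [Equiv.Perm.mul_apply]

private lemma sum_perm_pair_01 (m : ℕ) (g : Fin (m+2) → Fin (m+2) → ℝ) :
    ∑ π : Perm (Fin (m+2)), g (π 0) (π 1) =
      (Nat.factorial m : ℝ) * ∑ p, ((∑ j, g p j) - g p p) := by
  rw [← Equiv.sum_comp (Equiv.Perm.decomposeFin (n := m+1)).symm (fun π => g (π 0) (π 1))]
  rw [Fintype.sum_prod_type]
  have h1 : ∀ (p : Fin (m+2)) (e : Perm (Fin (m+1))),
      g ((Equiv.Perm.decomposeFin.symm (p, e)) 0) ((Equiv.Perm.decomposeFin.symm (p, e)) 1)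
        = g p (Equiv.swap 0 p (e 0).succ) := by
    intro p e
    rw [Equiv.Perm.decomposeFin_symm_apply_zero, Equiv.Perm.decomposeFin_symm_apply_one]
  simp only [h1]
  have h2 : ∀ p : Fin (m+2), ∑ e : Perm (Fin (m+1)), g p (Equiv.swap 0 p (e 0).succ)
      = (Nat.factorial m : ℝ) * ∑ q : Fin (m+1), g p (Equiv.swap 0 p q.succ) := by
    intro p
    rw [← Equiv.sum_comp (Equiv.Perm.decomposeFin (n := m)).symm
      (fun e => g p (Equiv.swap 0 p (e 0).succ))]
    rw [Fintype.sum_prod_type]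
    simp only [Equiv.Perm.decomposeFin_symm_apply_zero, Finset.sum_const,
      Finset.card_univ, Fintype.card_perm, Fintype.card_fin, nsmul_eq_mul]
    rw [← Finset.mul_sum]
  simp only [h2]
  rw [← Finset.mul_sum]
  congr 1
  apply Finset.sum_congr rfl
  intro p _
  have h3 : ∑ q : Fin (m+1), g p (Equiv.swap 0 p q.succ)
      = (∑ x : Fin (m+2), g p (Equiv.swap 0 p x)) - g p (Equiv.swap 0 p 0) := by
    rw [eq_sub_iff_add_eq, add_comm]
    exact (Fin.sum_univ_succ (f := fun x => g p (Equiv.swap 0 p x))).symm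
  rw [h3, Equiv.sum_comp (Equiv.swap 0 p) (fun x => g p x), Equiv.swap_apply_left]

private lemma sum_perm_pair (m : ℕ) (g : Fin (m+2) → Fin (m+2) → ℝ) (i i' : Fin (m+2))
    (h : i ≠ i') :
    ∑ π : Perm (Fin (m+2)), g (π i) (π i') =
      (Nat.factorial m : ℝ) * ∑ p, ((∑ j, g p j) - g p p) := by
  set k : Fin (m+2) := Equiv.swap 0 i i' with hk
  set τ : Perm (Fin (m+2)) := Equiv.swap 0 i * Equiv.swap 1 k with hτ
  have hk0 : k ≠ 0 := by
    simp only [hk, Ne, Equiv.swap_apply_eq_iff, Equiv.swap_apply_left]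
    exact fun hc => h hc.symm
  have hτ0 : τ 0 = i := by
    simp only [hτ, Equiv.Perm.mul_apply]
    rw [Equiv.swap_apply_of_ne_of_ne Fin.zero_ne_one (Ne.symm hk0), Equiv.swap_apply_left]
  have hτ1 : τ 1 = i' := by
    simp only [hτ, Equiv.Perm.mul_apply]
    rw [Equiv.swap_apply_left, hk, Equiv.swap_apply_self]
  rw [← sum_perm_pair_01 m g]
  rw [← Equiv.sum_comp (Equiv.mulRight τ) (fun σ => g (σ 0) (σ 1))]
  apply Finset.sum_congr rfl
  intro π _
  simp only [Equiv.coe_mulRight, Equiv.Perm.mul_apply, hτ0, hτ1]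

private lemma expand_sq (n : ℕ) (hn : 0 < n) (c : Fin n → Fin n → ℝ) :
    ∑ i, ∑ j, (c i j - (1/(n:ℝ)) * ∑ k, c i k - (1/(n:ℝ)) * ∑ k, c k j
      + (1/(n:ℝ)^2) * ∑ k, ∑ l, c k l)^2
    = (∑ i, ∑ j, (c i j)^2) - (1/(n:ℝ)) * (∑ i, (∑ k, c i k)^2)
      - (1/(n:ℝ)) * (∑ j, (∑ k, c k j)^2)
      + (1/(n:ℝ)^2) * (∑ k, ∑ l, c k l)^2 := by
  have hN : (n:ℝ) ≠ 0 := Nat.cast_ne_zero.2 hn.ne'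
  have hsw : ∑ j : Fin n, ∑ k : Fin n, c k j = ∑ k : Fin n, ∑ l : Fin n, c k l := by
    rw [Finset.sum_comm]
  have hG : ∑ i : Fin n, ∑ j : Fin n, (c i j - (1/(n:ℝ)) * ∑ k, c k j)^2
      = (∑ i : Fin n, ∑ j : Fin n, (c i j)^2)
        - (1/(n:ℝ)) * ∑ j : Fin n, (∑ k, c k j)^2 := by
    rw [Finset.sum_comm]
    have e : ∀ j ∈ (univ : Finset (Fin n)), ∑ i, (c i j - (1/(n:ℝ)) * ∑ k, c k j)^2
        = (∑ i, (c i j)^2) - (1/(n:ℝ))*(∑ k, c k j)^2 := by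
      intro j _
      rw [sum_sq_sub' univ (fun i => c i j) ((1/(n:ℝ)) * ∑ k, c k j)]
      simp only [Finset.card_univ, Fintype.card_fin]
      field_simp
      ring
    rw [Finset.sum_congr rfl e, Finset.sum_sub_distrib, ← Finset.mul_sum,
      Finset.sum_comm]
  have step1 : ∀ i ∈ (univ : Finset (Fin n)),
      ∑ j, (c i j - (1/(n:ℝ)) * ∑ k, c i k - (1/(n:ℝ)) * ∑ k, c k j
        + (1/(n:ℝ)^2) * ∑ k, ∑ l, c k l)^2
      = (∑ j, (c i j - (1/(n:ℝ)) * ∑ k, c k j)^2)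
        - (1/(n:ℝ))*(∑ k, c i k)^2
        + (2*(∑ k, ∑ l, c k l)/(n:ℝ)^2)*(∑ k, c i k)
        - (∑ k, ∑ l, c k l)^2/(n:ℝ)^3 := by
    intro i _
    have e1 : ∀ j ∈ (univ : Finset (Fin n)),
        (c i j - (1/(n:ℝ)) * ∑ k, c i k - (1/(n:ℝ)) * ∑ k, c k j
          + (1/(n:ℝ)^2) * ∑ k, ∑ l, c k l)^2
        = ((fun j => c i j - (1/(n:ℝ)) * ∑ k, c k j) j
            - ((1/(n:ℝ)) * (∑ k, c i k) - (1/(n:ℝ)^2) * ∑ k, ∑ l, c k l))^2 :=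
      fun j _ => by ring
    rw [Finset.sum_congr rfl e1,
      sum_sq_sub' univ (fun j => c i j - (1/(n:ℝ)) * ∑ k, c k j)
        ((1/(n:ℝ)) * (∑ k, c i k) - (1/(n:ℝ)^2) * ∑ k, ∑ l, c k l)]
    rw [Finset.sum_sub_distrib, ← Finset.mul_sum, hsw]
    simp only [Finset.card_univ, Fintype.card_fin]
    field_simp
    simp only [fun x => mul_comm (c i x) (n:ℝ)]
    ring
  rw [Finset.sum_congr rfl step1]
  rw [Finset.sum_sub_distrib, Finset.sum_add_distrib, Finset.sum_sub_distrib,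
    Finset.sum_const, ← Finset.mul_sum, ← Finset.mul_sum, hG]
  simp only [Finset.card_univ, Fintype.card_fin, nsmul_eq_mul]
  field_simp
  ring

private lemma hS2_lemma (m : ℕ) (c : Fin (m+2) → Fin (m+2) → ℝ) :
    ∑ π : Perm (Fin (m+2)), (∑ i, c i (π i))^2
    = (Nat.factorial (m+1) : ℝ) * (∑ i, ∑ j, (c i j)^2)
      + (Nat.factorial m : ℝ) *
          ((∑ i, ∑ j, c i j)^2 - ∑ p, (∑ i, c i p)^2
            - ((∑ i, (∑ j, c i j)^2) - ∑ i, ∑ j, (c i j)^2)) := by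
  have e0 : ∀ π : Perm (Fin (m+2)), ((∑ i, c i (π i))^2
      = ∑ i, ∑ i', c i (π i) * c i' (π i')) := by
    intro π; rw [sq, Finset.sum_mul_sum]
  rw [Finset.sum_congr rfl (fun π _ => e0 π), Finset.sum_comm]
  have e1 : ∀ i ∈ (univ : Finset (Fin (m+2))),
      ∑ π : Perm (Fin (m+2)), ∑ i', c i (π i) * c i' (π i')
      = (Nat.factorial (m+1) : ℝ) * (∑ j, (c i j)^2)
        + (Nat.factorial m : ℝ) *
            (((∑ j, c i j) * (∑ k, ∑ l, c k l) - ∑ p, c i p * (∑ i', c i' p))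
              - ((∑ j, c i j)^2 - ∑ j, (c i j)^2)) := by
    intro i _
    rw [Finset.sum_comm]
    rw [← Finset.add_sum_erase _ _ (mem_univ i)]
    have hdiag : ∑ π : Perm (Fin (m+2)), c i (π i) * c i (π i)
        = (Nat.factorial (m+1) : ℝ) * ∑ j, (c i j)^2 := by
      rw [sum_perm_single m (fun x => c i x * c i x) i]
      congr 1
      exact Finset.sum_congr rfl (fun j _ => (pow_two (c i j)).symm)
    have hoff : ∀ i' ∈ (univ : Finset (Fin (m+2))).erase i,
        ∑ π : Perm (Fin (m+2)), c i (π i) * c i' (π i')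
        = (Nat.factorial m : ℝ) * ((∑ p, c i p * ∑ j, c i' j) - ∑ p, c i p * c i' p) := by
      intro i' hi'
      have hne : i ≠ i' := (Finset.ne_of_mem_erase hi').symm
      rw [sum_perm_pair m (fun a b => c i a * c i' b) i i' hne]
      congr 1
      rw [Finset.sum_sub_distrib]
      congr 1
      exact Finset.sum_congr rfl (fun p _ => (Finset.mul_sum _ _ _).symm)
    rw [hdiag, Finset.sum_congr rfl hoff]
    congr 1
    rw [← Finset.mul_sum, Finset.sum_erase_eq_sub (mem_univ i)]
    have h4 : ∑ i', ((∑ p, c i p * ∑ j, c i' j) - ∑ p, c i p * c i' p)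
        = (∑ j, c i j) * (∑ k, ∑ l, c k l) - ∑ p, c i p * (∑ i', c i' p) := by
      rw [Finset.sum_sub_distrib]
      congr 1
      · have e2 : ∀ i' ∈ (univ : Finset (Fin (m+2))), (∑ p, c i p * ∑ j, c i' j)
            = (∑ j, c i j) * (∑ j, c i' j) := fun i' _ => by rw [← Finset.sum_mul]
        rw [Finset.sum_congr rfl e2, ← Finset.mul_sum]
      · rw [Finset.sum_comm]
        exact Finset.sum_congr rfl (fun p _ => (Finset.mul_sum _ _ _).symm)
    rw [h4]
    have h5 : (∑ p, c i p * ∑ j, c i j) - ∑ p, c i p * c i p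
        = (∑ j, c i j)^2 - ∑ j, (c i j)^2 := by
      congr 1
      · rw [← Finset.sum_mul, sq]
      · exact Finset.sum_congr rfl (fun j _ => (pow_two (c i j)).symm)
    rw [h5]
  rw [Finset.sum_congr rfl e1, Finset.sum_add_distrib, ← Finset.mul_sum, ← Finset.mul_sum]
  have hbig : ∑ x : Fin (m+2),
      (((∑ j, c x j) * (∑ k, ∑ l, c k l) - ∑ p, c x p * (∑ i', c i' p))
        - ((∑ j, c x j)^2 - ∑ j, (c x j)^2))
      = (∑ i, ∑ j, c i j)^2 - (∑ p, (∑ i, c i p)^2)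
        - ((∑ i, (∑ j, c i j)^2) - ∑ i, ∑ j, (c i j)^2) := by
    rw [Finset.sum_sub_distrib, Finset.sum_sub_distrib, Finset.sum_sub_distrib]
    have b1 : ∑ x : Fin (m+2), (∑ j, c x j) * (∑ k, ∑ l, c k l)
        = (∑ i, ∑ j, c i j)^2 := by
      rw [← Finset.sum_mul, sq]
    have b2 : ∑ x : Fin (m+2), ∑ p, c x p * (∑ i', c i' p)
        = ∑ p, (∑ i : Fin (m+2), c i p)^2 := by
      rw [Finset.sum_comm]
      refine Finset.sum_congr rfl fun p _ => ?_
      rw [← Finset.sum_mul, sq]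
    rw [b1, b2]
  rw [hbig]

private lemma hS1_lemma (m : ℕ) (c : Fin (m+2) → Fin (m+2) → ℝ) :
    ∑ π : Perm (Fin (m+2)), ∑ i, c i (π i)
      = (Nat.factorial (m+1) : ℝ) * ∑ i, ∑ j, c i j := by
  rw [Finset.sum_comm]
  rw [Finset.sum_congr rfl (fun i _ => sum_perm_single m (fun x => c i x) i)]
  rw [← Finset.mul_sum]

private lemma alg_final (M f A U V T : ℝ) (hf : f ≠ 0) (h1 : M+1 ≠ 0) (h2 : M+2 ≠ 0) :
    ((M+1)*f*A + f*(T^2 - V - (U - A))) / ((M+2)*((M+1)*f))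
      - ((M+1)*f*T / ((M+2)*((M+1)*f)))^2
    = (1/(M+2-1)) * (A - (1/(M+2))*U - (1/(M+2))*V + (1/(M+2)^2)*T^2) := by
  have h3 : M+2-1 = M+1 := by ring
  rw [h3]
  field_simp
  ring

end helpers

/-- Variance formula for `W = ∑ c_{i,π(i)}` under a uniform random permutation `π`
(Hoeffding's combinatorial variance identity). -/
theorem combinatorial_variance (n : ℕ) (hn : 2 ≤ n) (c : Fin n → Fin n → ℝ) :
    (∑ π : Equiv.Perm (Fin n), (∑ i : Fin n, c i (π i)) ^ 2) /
        (Fintype.card (Equiv.Perm (Fin n)) : ℝ) -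
      ((∑ π : Equiv.Perm (Fin n), ∑ i : Fin n, c i (π i)) /
        (Fintype.card (Equiv.Perm (Fin n)) : ℝ)) ^ 2 =
    (1 / ((n : ℝ) - 1)) *
      ∑ i : Fin n, ∑ j : Fin n,
        (c i j - (1 / (n : ℝ)) * ∑ k : Fin n, c i k
          - (1 / (n : ℝ)) * ∑ k : Fin n, c k j
          + (1 / (n : ℝ) ^ 2) * ∑ k : Fin n, ∑ l : Fin n, c k l) ^ 2 := by
  obtain ⟨m, rfl⟩ : ∃ m, n = m + 2 := ⟨n - 2, by omega⟩
  rw [hS1_lemma m c, hS2_lemma m c, expand_sq (m+2) (by omega) c]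
  rw [Fintype.card_perm, Fintype.card_fin]
  have hfac1 : (Nat.factorial (m+1) : ℝ) = ((m:ℝ)+1) * (Nat.factorial m : ℝ) := by
    rw [Nat.factorial_succ]; push_cast; ring
  have hfac2 : (Nat.factorial (m+2) : ℝ) = ((m:ℝ)+2) * (((m:ℝ)+1) * (Nat.factorial m : ℝ)) := by
    rw [Nat.factorial_succ, Nat.factorial_succ]; push_cast; ring
  have hm0 : (Nat.factorial m : ℝ) ≠ 0 := Nat.cast_ne_zero.2 (Nat.factorial_ne_zero m)
  have h1 : ((m:ℝ)+1) ≠ 0 := by positivity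
  have h2 : ((m:ℝ)+2) ≠ 0 := by positivity
  have hc : ((m+2 : ℕ) : ℝ) = (m:ℝ)+2 := by push_cast; ring
  rw [hfac1, hfac2, hc]
  exact alg_final (m:ℝ) (Nat.factorial m : ℝ) _ _ _ _ hm0 h1 h2
end

section
/- Let v ∈ ℝ^m be a nonzero vector and let 1 denote the all-ones vector in ℝ^m. If ∑_i v_i² - (1/m)(∑_i v_i)² ≤ κ with κ < |v|²/4, then |v - h·(1/√m)|² ≤ C κ for a universal constant C, where h = |v| · sgn(⟨v, 1/√m⟩). -/
open Finset

/-- If `∑ v_i² - (1/m)(∑ v_i)² ≤ κ` with `κ < |v|²/4`, then `v` is within distance `√(Cκ)`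
of the vector `h·(1/√m)·1`, where `h = |v|·sgn(⟨v, 1/√m⟩)`, for a universal constant `C`. -/
theorem close_to_constant_vector :
    ∃ C : ℝ, 0 < C ∧
      ∀ (m : ℕ), 1 ≤ m → ∀ (v : Fin m → ℝ), v ≠ 0 → ∀ κ : ℝ,
        (∑ i, (v i) ^ 2) - (1 / (m : ℝ)) * (∑ i, v i) ^ 2 ≤ κ →
        κ < (∑ i, (v i) ^ 2) / 4 →
        ∑ i, (v i - Real.sqrt (∑ i, (v i) ^ 2) *
            Real.sign ((∑ i, v i) / Real.sqrt m) / Real.sqrt m) ^ 2 ≤ C * κ := by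
  refine ⟨2, by norm_num, fun m hm v hv κ h1 h2 => ?_⟩
  set S := ∑ i, (v i) ^ 2 with hSdef
  set T := ∑ i, v i with hTdef
  have hmpos : (0 : ℝ) < m := by exact_mod_cast hm
  have hsqm : (0 : ℝ) < Real.sqrt m := Real.sqrt_pos.mpr hmpos
  have hsqm2 : (Real.sqrt m) ^ 2 = (m : ℝ) := Real.sq_sqrt hmpos.le
  have hSpos : 0 < S := by
    have : ∃ i, v i ≠ 0 := by
      by_contra h
      push_neg at h
      exact hv (funext h)
    obtain ⟨i, hi⟩ := this
    have : 0 < (v i) ^ 2 := by positivity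
    exact Finset.sum_pos' (fun j _ => by positivity) ⟨i, Finset.mem_univ i, this⟩
  set s := T / Real.sqrt m with hsdef
  have hs2 : s ^ 2 = T ^ 2 / m := by
    rw [hsdef, div_pow, hsqm2]
  -- Cauchy-Schwarz: T^2 ≤ m * S
  have cauchy : T ^ 2 ≤ (m : ℝ) * S := by
    have := Finset.sum_mul_sq_le_sq_mul_sq Finset.univ (fun _ : Fin m => (1:ℝ)) v
    simpa [hTdef, hSdef, Finset.card_univ, mul_comm] using this
  have hs2S : s ^ 2 ≤ S := by
    rw [hs2, div_le_iff₀ hmpos, mul_comm]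
    exact cauchy
  have hkey : S - s ^ 2 ≤ κ := by
    have : S - (1 / (m : ℝ)) * T ^ 2 = S - s ^ 2 := by
      rw [hs2]; ring
    linarith [h1, this.symm.le, this.le]
  have hk0 : 0 ≤ κ := le_trans (by linarith) hkey
  have hsne : s ≠ 0 := by
    intro h
    rw [h] at hkey
    simp at hkey
    linarith
  have hsign : Real.sign s * s = |s| := by
    rcases lt_or_gt_of_ne hsne with h | h
    · rw [Real.sign_of_neg h, abs_of_neg h]; ring
    · rw [Real.sign_of_pos h, abs_of_pos h]; ring
  have hsignsq : (Real.sign s) ^ 2 = 1 := by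
    rcases lt_or_gt_of_ne hsne with h | h
    · rw [Real.sign_of_neg h]; ring
    · rw [Real.sign_of_pos h]; ring
  set c := Real.sqrt S * Real.sign s / Real.sqrt m with hcdef
  have expand : ∑ i, (v i - c) ^ 2 = S - 2 * c * T + m * c ^ 2 := by
    have : ∀ i : Fin m, (v i - c) ^ 2 = v i ^ 2 - 2 * c * v i + c ^ 2 := fun i => by ring
    simp_rw [this, Finset.sum_add_distrib, Finset.sum_sub_distrib, ← Finset.mul_sum,
      Finset.sum_const, Finset.card_univ, Fintype.card_fin, nsmul_eq_mul]
    rfl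
  have hsqS : (Real.sqrt S) ^ 2 = S := Real.sq_sqrt hSpos.le
  have hcT : c * T = Real.sqrt S * |s| := by
    rw [hcdef, ← hsign, hsdef]
    field_simp
  have hmc2 : (m : ℝ) * c ^ 2 = S := by
    rw [hcdef, div_pow, mul_pow, hsqS, hsignsq, hsqm2]
    field_simp
  have hsum : ∑ i, (v i - c) ^ 2 = 2 * S - 2 * Real.sqrt S * |s| := by
    rw [expand, mul_assoc, hcT, hmc2]; ring
  -- |s| ≤ √S, so s^2 ≤ √S * |s|
  have habs : |s| ≤ Real.sqrt S := by
    rw [← Real.sqrt_sq_eq_abs]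
    exact Real.sqrt_le_sqrt hs2S
  have hs2le : s ^ 2 ≤ Real.sqrt S * |s| := by
    rw [← sq_abs s, sq]
    exact mul_le_mul_of_nonneg_right habs (abs_nonneg s)
  calc ∑ i, (v i - c) ^ 2 = 2 * S - 2 * Real.sqrt S * |s| := hsum
    _ ≤ 2 * S - 2 * s ^ 2 := by linarith
    _ ≤ 2 * κ := by linarith
end

section
/- For θ ∈ (0,1] and r ∈ (0,1], define G(θ,r) = ∪_{I ⊆ [n], #I ≥ (1-θ)n} G_I(θ,r), where G_I(θ,r) = {x ∈ S^{n-1}_ℂ : ∃ ξ ∈ ℂ, |ξ| ≤ 1, |x_{|I} - (ξ/√(#I)) 1_I| ≤ r}. Then for n ≥ 1/θ, G(θ,r) admits a 3r-net of cardinality at most exp(C n θ log(2/(θr))) for a universal constant C. -/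
open Finset Metric MeasureTheory Module
open scoped ENNReal

lemma exists_max_separated {E : Type*} [MetricSpace E] {δ : ℝ} (hδ : 0 < δ) (t : Finset E) :
    ∃ s ⊆ t, (∀ a ∈ s, ∀ b ∈ s, a ≠ b → δ < dist a b) ∧ ∀ p ∈ t, ∃ q ∈ s, dist p q ≤ δ := by
  classical
  set P : Finset (Finset E) := t.powerset.filter
    (fun s => ∀ a ∈ s, ∀ b ∈ s, a ≠ b → δ < dist a b) with hP
  have hPne : P.Nonempty := ⟨∅, by simp [hP]⟩
  obtain ⟨s, hsP, hsmax⟩ := P.exists_max_image (fun s => s.card) hPne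
  rw [hP, mem_filter, mem_powerset] at hsP
  refine ⟨s, hsP.1, hsP.2, fun p hp => ?_⟩
  by_contra hcon
  push_neg at hcon
  have hps : p ∉ s := by
    intro h
    have := hcon p h
    simp only [dist_self] at this
    linarith
  have hins : insert p s ∈ P := by
    rw [hP, mem_filter, mem_powerset]
    refine ⟨insert_subset hp hsP.1, fun a ha b hb hab => ?_⟩
    rcases mem_insert.1 ha with ha' | ha'
    · rcases mem_insert.1 hb with hb' | hb'
      · exact absurd (ha'.trans hb'.symm) hab
      · subst ha'; exact hcon b hb'
    · rcases mem_insert.1 hb with hb' | hb'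
      · subst hb'; rw [dist_comm]; exact hcon a ha'
      · exact hsP.2 a ha' b hb' hab
  have := hsmax _ hins
  rw [card_insert_of_notMem hps] at this
  omega

lemma exists_net (E : Type*) [NormedAddCommGroup E] [NormedSpace ℝ E] [FiniteDimensional ℝ E]
    {ε : ℝ} (hε : 0 < ε) :
    ∃ N : Finset E, (∀ x ∈ closedBall (0:E) 1, ∃ y ∈ N, dist x y ≤ ε) ∧
      (N.card : ℝ) ≤ (1 + 4/ε) ^ (finrank ℝ E) := by
  classical
  rcases subsingleton_or_nontrivial E with hE | hE
  · refine ⟨{0}, fun x _ => ⟨0, by simp, by rw [Subsingleton.elim x 0]; simp [hε.le]⟩, ?_⟩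
    simp only [card_singleton, Nat.cast_one]
    have : (0:ℝ) ≤ 4/ε := by positivity
    exact one_le_pow₀ (by linarith)
  · have hK : IsCompact (closedBall (0:E) 1) := isCompact_closedBall 0 1
    have htb := hK.totallyBounded
    rw [totallyBounded_iff_subset] at htb
    obtain ⟨t, hts, htfin, htcov⟩ := htb {p : E × E | dist p.1 p.2 < ε/2}
      (dist_mem_uniformity (by positivity))
    obtain ⟨s, hst, hsep, hscov⟩ := exists_max_separated (δ := ε/2) (by positivity) htfin.toFinset
    have hsK : ∀ q ∈ s, q ∈ closedBall (0:E) 1 := fun q hq => hts (htfin.mem_toFinset.1 (hst hq))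
    refine ⟨s, ?_, ?_⟩
    · intro x hx
      obtain ⟨p, hpt, hxp⟩ := Set.mem_iUnion₂.1 (htcov hx)
      obtain ⟨q, hqs, hpq⟩ := hscov p (htfin.mem_toFinset.2 hpt)
      refine ⟨q, hqs, ?_⟩
      have h1 : dist x p < ε/2 := hxp
      calc dist x q ≤ dist x p + dist p q := dist_triangle _ _ _
      _ ≤ ε := by linarith
    · letI : MeasurableSpace E := borel E
      haveI : BorelSpace E := ⟨rfl⟩
      set μ : Measure E := (Module.finBasis ℝ E).addHaar with hμ
      set d := finrank ℝ E with hd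
      have hdisj : (↑s : Set E).PairwiseDisjoint (fun q => ball q (ε/4)) := by
        intro a ha b hb hab
        exact ball_disjoint_ball (by
          have := hsep a ha b hb hab
          linarith)
      have hmeas : ∀ q ∈ s, MeasurableSet (ball q (ε/4)) := fun q _ => measurableSet_ball
      have hsub : (⋃ q ∈ s, ball q (ε/4)) ⊆ closedBall (0:E) (1 + ε/4) := by
        intro z hz
        obtain ⟨q, hq, hzq⟩ := Set.mem_iUnion₂.1 hz
        have h1 : dist z q < ε/4 := hzq
        have h2 : dist q 0 ≤ 1 := mem_closedBall.1 (hsK q hq)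
        refine mem_closedBall.2 ?_
        calc dist z 0 ≤ dist z q + dist q 0 := dist_triangle _ _ _
        _ ≤ 1 + ε/4 := by linarith
      have hμsum : ∑ q ∈ s, μ (ball q (ε/4)) ≤ μ (closedBall (0:E) (1 + ε/4)) := by
        rw [← measure_biUnion_finset hdisj hmeas]
        exact measure_mono hsub
      have hball : ∀ q : E, μ (ball q (ε/4)) = ENNReal.ofReal ((ε/4)^d) * μ (ball 0 1) :=
        fun q => Measure.addHaar_ball μ q (by positivity)
      have hcball : μ (closedBall (0:E) (1 + ε/4))
          = ENNReal.ofReal ((1+ε/4)^d) * μ (ball 0 1) :=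
        Measure.addHaar_closedBall μ 0 (by positivity)
      have hB0 : μ (ball (0:E) 1) ≠ 0 := (measure_ball_pos μ 0 one_pos).ne'
      have hBtop : μ (ball (0:E) 1) ≠ ⊤ := measure_ball_lt_top.ne
      rw [hcball] at hμsum
      simp only [hball, Finset.sum_const, nsmul_eq_mul] at hμsum
      rw [← mul_assoc] at hμsum
      have key : (↑s.card : ℝ≥0∞) * ENNReal.ofReal ((ε/4)^d) ≤ ENNReal.ofReal ((1+ε/4)^d) :=
        (ENNReal.mul_le_mul_iff_left hB0 hBtop).1 hμsum
      have key2 : (s.card : ℝ) * (ε/4)^d ≤ (1+ε/4)^d := by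
        have := ENNReal.toReal_mono (by simp) key
        rwa [ENNReal.toReal_mul, ENNReal.toReal_natCast, ENNReal.toReal_ofReal (by positivity),
          ENNReal.toReal_ofReal (by positivity)] at this
      have hε4 : (0:ℝ) < (ε/4)^d := by positivity
      rw [← le_div_iff₀ hε4] at key2
      calc (s.card : ℝ) ≤ (1+ε/4)^d / (ε/4)^d := key2
        _ = ((1+ε/4)/(ε/4))^d := (div_pow _ _ _).symm
        _ = (1 + 4/ε)^d := by congr 1; field_simp; ring
open Finset

lemma sum_choose_le_pow {n m : ℕ} (h1 : 1 ≤ m) (hmn : m ≤ n) :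
    (∑ k ∈ Finset.range (m+1), (n.choose k : ℝ)) ≤ (Real.exp 1 * n / m) ^ m := by
  have hm0 : (0:ℝ) < m := by exact_mod_cast h1
  have hn0 : (0:ℝ) < n := lt_of_lt_of_le hm0 (by exact_mod_cast hmn)
  set p : ℝ := m / n with hp
  have hp0 : 0 < p := by positivity
  have hp1 : p ≤ 1 := by rw [hp, div_le_one hn0]; exact_mod_cast hmn
  have step1 : (∑ k ∈ Finset.range (m+1), (n.choose k : ℝ))
      ≤ (1/p)^m * ∑ k ∈ Finset.range (m+1), (n.choose k : ℝ) * p^k := by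
    rw [Finset.mul_sum]
    refine Finset.sum_le_sum fun k hk => ?_
    have hk' : k ≤ m := Nat.lt_succ_iff.1 (Finset.mem_range.1 hk)
    have hpk : p^m ≤ p^k := pow_le_pow_of_le_one hp0.le hp1 hk'
    have h2 : (1:ℝ) ≤ (1/p)^m * p^k := by
      rw [one_div, inv_pow, ← div_eq_inv_mul, le_div_iff₀ (by positivity)]
      simpa using hpk
    calc (n.choose k : ℝ) = (n.choose k : ℝ) * 1 := (mul_one _).symm
    _ ≤ (n.choose k : ℝ) * ((1/p)^m * p^k) := by
        refine mul_le_mul_of_nonneg_left h2 (by positivity)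
    _ = (1/p)^m * ((n.choose k : ℝ) * p^k) := by ring
  have step2 : (∑ k ∈ Finset.range (m+1), (n.choose k : ℝ) * p^k)
      ≤ ∑ k ∈ Finset.range (n+1), (n.choose k : ℝ) * p^k := by
    refine Finset.sum_le_sum_of_subset_of_nonneg
      (Finset.range_subset_range.2 (by omega)) (fun k _ _ => by positivity)
  have step3 : (∑ k ∈ Finset.range (n+1), (n.choose k : ℝ) * p^k) = (p+1)^n := by
    rw [add_pow]
    refine Finset.sum_congr rfl fun k _ => by ring
  have step4 : (p+1)^n ≤ Real.exp 1 ^ m := by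
    have h5 : p + 1 ≤ Real.exp p := by linarith [Real.add_one_le_exp p]
    calc (p+1)^n ≤ Real.exp p ^ n := pow_le_pow_left₀ (by positivity) h5 n
    _ = Real.exp (n * p) := (Real.exp_nat_mul p n).symm
    _ = Real.exp m := by rw [hp]; congr 1; field_simp
    _ = Real.exp 1 ^ m := by rw [← Real.exp_nat_mul, mul_one]
  calc (∑ k ∈ Finset.range (m+1), (n.choose k : ℝ))
      ≤ (1/p)^m * ∑ k ∈ Finset.range (m+1), (n.choose k : ℝ) * p^k := step1
    _ ≤ (1/p)^m * (p+1)^n := by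
        refine mul_le_mul_of_nonneg_left (step2.trans (le_of_eq step3)) (by positivity)
    _ ≤ (1/p)^m * Real.exp 1 ^ m := mul_le_mul_of_nonneg_left step4 (by positivity)
    _ = (Real.exp 1 * (1/p))^m := by rw [mul_pow]; ring
    _ = (Real.exp 1 * n / m) ^ m := by rw [hp, one_div_div, mul_div_assoc]

set_option maxHeartbeats 1000000 in
/-- Net for the set `G(θ,r)` of unit vectors of `ℂ^n` which, on some set `I` of at least
`(1-θ)n` coordinates, are within `r` of a multiple `(ξ/√#I)·1_I` with `|ξ| ≤ 1`: for
`n ≥ 1/θ` it admits a `3r`-net of cardinality at most `exp(C n θ log(2/(θr)))`. -/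
theorem almost_constant_vectors_net :
    ∃ C : ℝ, 0 < C ∧
      ∀ (n : ℕ) (θ r : ℝ), θ ∈ Set.Ioc (0 : ℝ) 1 → r ∈ Set.Ioc (0 : ℝ) 1 →
        1 / θ ≤ (n : ℝ) →
        ∃ N : Finset (EuclideanSpace ℂ (Fin n)),
          (∀ x : EuclideanSpace ℂ (Fin n), ‖x‖ = 1 →
              (∃ I : Finset (Fin n), (1 - θ) * n ≤ (I.card : ℝ) ∧
                ∃ ξ : ℂ, ‖ξ‖ ≤ 1 ∧
                  Real.sqrt (∑ i ∈ I, ‖x i - ξ / (Real.sqrt I.card : ℂ)‖ ^ 2) ≤ r) →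
              ∃ y ∈ N, dist x y ≤ 3 * r) ∧
          (N.card : ℝ) ≤ Real.exp (C * n * θ * Real.log (2 / (θ * r))) := by
  classical
  refine ⟨15, by norm_num, ?_⟩
  intro n θ r hθ hr hn
  obtain ⟨hθ0, hθ1⟩ := hθ
  obtain ⟨hr0, hr1⟩ := hr
  have hθn : 1 ≤ θ * n := by
    rw [div_le_iff₀ hθ0] at hn
    linarith
  have hn0 : (0:ℝ) < n := by nlinarith
  set m : ℕ := ⌊θ * n⌋₊ with hm
  have hm1 : 1 ≤ m := Nat.le_floor (by exact_mod_cast hθn)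
  have hm0 : (0:ℝ) < m := by exact_mod_cast hm1
  have hm1' : (1:ℝ) ≤ m := by exact_mod_cast hm1
  have hmle : (m:ℝ) ≤ θ * n := Nat.floor_le (by positivity)
  have hmge : θ * n / 2 ≤ m := by
    rcases le_or_gt 2 (θ * n) with h | h
    · have := Nat.sub_one_lt_floor (θ * n)
      rw [← hm] at this
      linarith
    · linarith
  have hmn : m ≤ n := by
    have h1 : (m:ℝ) ≤ n := hmle.trans (by nlinarith)
    exact_mod_cast h1
  -- nets
  obtain ⟨N₁, hN₁cov, hN₁card⟩ := exists_net ℂ hr0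
  rw [Complex.finrank_real_complex] at hN₁card
  have hnet2 : ∀ I : Finset (Fin n),
      ∃ N₂ : Finset (EuclideanSpace ℂ ↥(Iᶜ)),
        (∀ x ∈ Metric.closedBall (0 : EuclideanSpace ℂ ↥(Iᶜ)) 1, ∃ y ∈ N₂, dist x y ≤ r) ∧
        (N₂.card : ℝ) ≤ (1 + 4/r) ^ (2 * (Iᶜ).card) := by
    intro I
    obtain ⟨N₂, h1, h2⟩ := exists_net (EuclideanSpace ℂ ↥(Iᶜ)) hr0
    refine ⟨N₂, h1, ?_⟩
    rwa [← Module.finrank_mul_finrank ℝ ℂ (EuclideanSpace ℂ ↥(Iᶜ)),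
      Complex.finrank_real_complex, finrank_euclideanSpace, Fintype.card_coe] at h2
  choose N₂ hN₂cov hN₂card using hnet2
  set S : Finset (Finset (Fin n)) :=
    univ.powerset.filter (fun I => (1-θ) * n ≤ (I.card:ℝ)) with hS
  set f : (I : Finset (Fin n)) → ℂ × EuclideanSpace ℂ ↥(Iᶜ) → EuclideanSpace ℂ (Fin n) :=
    fun I p => WithLp.toLp 2 (fun i => if h : i ∈ Iᶜ then p.2 ⟨i, h⟩ else p.1 / (Real.sqrt (I.card:ℝ) : ℂ))
    with hf
  have hIcm : ∀ I ∈ S, (Iᶜ).card ≤ m := by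
    intro I hIS
    rw [hS, mem_filter] at hIS
    have hcle : I.card ≤ n := by
      have := card_le_card (subset_univ I)
      simpa using this
    rw [card_compl, Fintype.card_fin]
    refine Nat.le_floor ?_
    rw [Nat.cast_sub hcle]
    have := hIS.2
    linarith
  refine ⟨S.biUnion (fun I => (N₁ ×ˢ N₂ I).image (f I)), ?_, ?_⟩
  · rintro x hx ⟨I, hIcard, ξ, hξ, hxI⟩
    have hIS : I ∈ S := by
      rw [hS, mem_filter]
      exact ⟨mem_powerset.2 (subset_univ I), hIcard⟩
    obtain ⟨ξ', hξ'N, hξξ'⟩ := hN₁cov ξ (mem_closedBall_zero_iff.2 hξ)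
    set xc : EuclideanSpace ℂ ↥(Iᶜ) := WithLp.toLp 2 (fun j : ↥(Iᶜ) => x j.1) with hxc
    have hxcnorm : ‖xc‖ ≤ 1 := by
      rw [EuclideanSpace.norm_eq]
      rw [show ∑ j : ↥(Iᶜ), ‖xc j‖^2 = ∑ i ∈ Iᶜ, ‖x i‖^2 from
        Finset.sum_coe_sort (Iᶜ) (fun i => ‖x i‖^2)]
      have h2 : ∑ i ∈ Iᶜ, ‖x i‖^2 ≤ ∑ i : Fin n, ‖x i‖^2 :=
        Finset.sum_le_sum_of_subset_of_nonneg (subset_univ _) (fun i _ _ => by positivity)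
      have h3 : Real.sqrt (∑ i : Fin n, ‖x i‖^2) = 1 := by
        rw [← EuclideanSpace.norm_eq, hx]
      calc Real.sqrt (∑ i ∈ Iᶜ, ‖x i‖^2) ≤ Real.sqrt (∑ i : Fin n, ‖x i‖^2) :=
            Real.sqrt_le_sqrt h2
      _ = 1 := h3
    obtain ⟨z, hzN, hxz⟩ := hN₂cov I xc (mem_closedBall_zero_iff.2 hxcnorm)
    refine ⟨f I (ξ', z), mem_biUnion.2 ⟨I, hIS,
      mem_image.2 ⟨(ξ', z), mem_product.2 ⟨hξ'N, hzN⟩, rfl⟩⟩, ?_⟩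
    set c : ℂ := ((Real.sqrt (I.card:ℝ) : ℝ) : ℂ) with hc
    set y : EuclideanSpace ℂ (Fin n) := f I (ξ', z) with hy
    have hyI : ∀ i ∈ I, y i = ξ' / c := by
      intro i hi
      have hni : i ∉ Iᶜ := by simp [hi]
      show (if h : i ∈ Iᶜ then z ⟨i, h⟩ else ξ' / c) = ξ' / c
      rw [dif_neg hni]
    have hyIc : ∀ j : ↥(Iᶜ : Finset (Fin n)), y (j:Fin n) = z j := by
      intro j
      have hji : (j:Fin n) ∈ Iᶜ := j.2
      show (if h : (j:Fin n) ∈ Iᶜ then z ⟨(j:Fin n), h⟩ else ξ' / c) = z j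
      rw [dif_pos hji]
    have hdist : dist x y = Real.sqrt (∑ i, ‖x i - y i‖^2) := by
      rw [EuclideanSpace.dist_eq]
      congr 1
      simp only [dist_eq_norm]
    have hBpart : ∑ i ∈ Iᶜ, ‖x i - y i‖^2 ≤ r^2 := by
      have e1 : ∑ i ∈ Iᶜ, ‖x i - y i‖^2 = ∑ j : ↥(Iᶜ), ‖xc j - z j‖^2 := by
        rw [← Finset.sum_coe_sort (Iᶜ) (fun i => ‖x i - y i‖^2)]
        exact Finset.sum_congr rfl fun j _ => by rw [hyIc j]
      have e2 : Real.sqrt (∑ j : ↥(Iᶜ), ‖xc j - z j‖^2) = dist xc z := by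
        rw [EuclideanSpace.dist_eq]
        congr 1
        simp only [dist_eq_norm]
      have e3 : ∑ j : ↥(Iᶜ), ‖xc j - z j‖^2 = dist xc z ^ 2 := by
        rw [← e2, Real.sq_sqrt (Finset.sum_nonneg fun j _ => by positivity)]
      rw [e1, e3]
      exact pow_le_pow_left₀ dist_nonneg hxz 2
    have hApart : ∑ i ∈ I, ‖x i - ξ' / c‖^2 ≤ (2*r)^2 := by
      set a : EuclideanSpace ℂ ↥I := WithLp.toLp 2 (fun j : ↥I => x j.1 - ξ / c) with ha
      set w : EuclideanSpace ℂ ↥I := WithLp.toLp 2 (fun _ : ↥I => ξ / c - ξ' / c) with hw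
      have hna : ‖a‖ ≤ r := by
        rw [EuclideanSpace.norm_eq]
        simp only [ha, PiLp.toLp_apply]
        rw [Finset.sum_coe_sort I (fun i => ‖x i - ξ/c‖^2)]
        exact hxI
      have hnw : ‖w‖ ≤ r := by
        have hsum : ∑ j : ↥I, ‖w j‖^2 = (I.card:ℝ) * ‖ξ/c - ξ'/c‖^2 := by
          simp only [hw, PiLp.toLp_apply]
          rw [Finset.sum_const, Finset.card_univ, Fintype.card_coe, nsmul_eq_mul]
        rw [EuclideanSpace.norm_eq, hsum]
        rcases Nat.eq_zero_or_pos I.card with h0 | hpos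
        · rw [h0]
          simp [hr0.le]
        · have hcpos : (0:ℝ) < I.card := by exact_mod_cast hpos
          have hcq : ‖ξ/c - ξ'/c‖ = ‖ξ - ξ'‖ / Real.sqrt (I.card:ℝ) := by
            rw [div_sub_div_same, norm_div, hc, Complex.norm_real,
              Real.norm_of_nonneg (Real.sqrt_nonneg _)]
          rw [hcq, div_pow, Real.sq_sqrt hcpos.le]
          rw [mul_div_cancel₀ _ hcpos.ne']
          rw [Real.sqrt_sq (norm_nonneg _)]
          rw [← dist_eq_norm]
          exact hξξ'
      have key : Real.sqrt (∑ i ∈ I, ‖x i - ξ'/c‖^2) ≤ 2*r := by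
        have e1 : ∑ i ∈ I, ‖x i - ξ'/c‖^2 = ∑ j : ↥I, ‖(a+w) j‖^2 := by
          rw [← Finset.sum_coe_sort I (fun i => ‖x i - ξ'/c‖^2)]
          refine Finset.sum_congr rfl fun j _ => ?_
          have haw : (a+w) j = x (j:Fin n) - ξ'/c := by
            have : (a+w) j = a j + w j := rfl
            rw [this, ha, hw]
            show (x (j:Fin n) - ξ/c) + (ξ/c - ξ'/c) = x (j:Fin n) - ξ'/c
            ring
          rw [haw]
        rw [e1, ← EuclideanSpace.norm_eq]
        calc ‖a+w‖ ≤ ‖a‖ + ‖w‖ := norm_add_le a w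
        _ ≤ 2*r := by linarith
      have hnn : 0 ≤ ∑ i ∈ I, ‖x i - ξ'/c‖^2 := Finset.sum_nonneg fun i _ => by positivity
      nlinarith [Real.sq_sqrt hnn, Real.sqrt_nonneg (∑ i ∈ I, ‖x i - ξ'/c‖^2)]
    rw [hdist]
    have hsplit : ∑ i, ‖x i - y i‖^2 = ∑ i ∈ I, ‖x i - y i‖^2 + ∑ i ∈ Iᶜ, ‖x i - y i‖^2 :=
      (Finset.sum_add_sum_compl I _).symm
    have hIeq : ∑ i ∈ I, ‖x i - y i‖^2 = ∑ i ∈ I, ‖x i - ξ'/c‖^2 :=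
      Finset.sum_congr rfl fun i hi => by rw [hyI i hi]
    have htot : ∑ i, ‖x i - y i‖^2 ≤ (3*r)^2 := by
      rw [hsplit, hIeq]
      nlinarith [hApart, hBpart]
    calc Real.sqrt (∑ i, ‖x i - y i‖^2) ≤ Real.sqrt ((3*r)^2) := Real.sqrt_le_sqrt htot
    _ = 3*r := Real.sqrt_sq (by positivity)
  · -- cardinality
    set B : ℝ := 1 + 4/r with hB
    have hB1 : (1:ℝ) ≤ B := by
      rw [hB]
      have : (0:ℝ) ≤ 4/r := by positivity
      linarith
    have hterm : ∀ I ∈ S, (((N₁ ×ˢ N₂ I).image (f I)).card : ℝ) ≤ B^2 * B^(2*m) := by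
      intro I hIS
      have h1 : ((N₁ ×ˢ N₂ I).image (f I)).card ≤ N₁.card * (N₂ I).card :=
        (card_image_le).trans (le_of_eq (card_product _ _))
      have h2 : ((N₂ I).card : ℝ) ≤ B^(2*m) :=
        (hN₂card I).trans (pow_le_pow_right₀ hB1 (Nat.mul_le_mul_left 2 (hIcm I hIS)))
      calc (((N₁ ×ˢ N₂ I).image (f I)).card : ℝ) ≤ (N₁.card : ℝ) * ((N₂ I).card : ℝ) := by
            exact_mod_cast h1
      _ ≤ B^2 * B^(2*m) := mul_le_mul hN₁card h2 (by positivity) (by positivity)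
    have hcard1 : ((S.biUnion (fun I => (N₁ ×ˢ N₂ I).image (f I))).card : ℝ)
        ≤ (S.card : ℝ) * (B^2 * B^(2*m)) := by
      have h1 := Finset.card_biUnion_le (s := S) (t := fun I => (N₁ ×ˢ N₂ I).image (f I))
      have h2 : ((S.biUnion (fun I => (N₁ ×ˢ N₂ I).image (f I))).card : ℝ)
          ≤ ∑ I ∈ S, (((N₁ ×ˢ N₂ I).image (f I)).card : ℝ) := by
        exact_mod_cast h1
      refine h2.trans ?_
      calc ∑ I ∈ S, (((N₁ ×ˢ N₂ I).image (f I)).card : ℝ) ≤ ∑ _I ∈ S, (B^2 * B^(2*m)) :=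
          Finset.sum_le_sum hterm
      _ = (S.card : ℝ) * (B^2 * B^(2*m)) := by rw [Finset.sum_const, nsmul_eq_mul]
    have hScard : (S.card : ℝ) ≤ (Real.exp 1 * n / m)^m := by
      have hinj : S.card = (S.image compl).card :=
        (Finset.card_image_of_injective S compl_injective).symm
      have hsub : S.image compl ⊆ (Finset.range (m+1)).biUnion
          (fun k => Finset.powersetCard k (univ : Finset (Fin n))) := by
        intro J hJ
        obtain ⟨I, hIS, rfl⟩ := mem_image.1 hJ
        refine mem_biUnion.2 ⟨(Iᶜ).card, mem_range.2 (Nat.lt_succ_of_le (hIcm I hIS)), ?_⟩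
        exact mem_powersetCard.2 ⟨subset_univ _, rfl⟩
      have h3 : (S.image compl).card ≤ ∑ k ∈ Finset.range (m+1), (n.choose k) := by
        refine (card_le_card hsub).trans ?_
        refine (card_biUnion_le).trans (le_of_eq ?_)
        refine Finset.sum_congr rfl fun k _ => ?_
        rw [card_powersetCard, card_univ, Fintype.card_fin]
      have h4 : (S.card : ℝ) ≤ ∑ k ∈ Finset.range (m+1), ((n.choose k):ℝ) := by
        rw [hinj]; exact_mod_cast h3
      exact h4.trans (sum_choose_le_pow hm1 hmn)
    set X : ℝ := 2 / (θ * r) with hX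
    have hX2 : (2:ℝ) ≤ X := by
      rw [hX, le_div_iff₀ (by positivity)]
      nlinarith
    have hX1 : (1:ℝ) ≤ X := by linarith
    set L : ℝ := Real.log X with hL
    have hL0 : 0 ≤ L := Real.log_nonneg hX1
    have hexpL : Real.exp L = X := Real.exp_log (by linarith)
    have hX3 : X^3 = 8 / (θ*r)^3 := by
      rw [hX, div_pow]; norm_num
    have hθr0 : 0 ≤ θ * r := by positivity
    have hA : Real.exp 1 * n / m ≤ X^3 := by
      have he3 : Real.exp 1 ≤ 3 := by
        have := Real.exp_one_lt_d9
        linarith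
      have hnm : (n:ℝ)/m ≤ 2/θ := by
        rw [div_le_div_iff₀ hm0 hθ0]
        linarith
      have h5 : Real.exp 1 * n / m ≤ 3 * (2/θ) := by
        rw [mul_div_assoc]
        exact mul_le_mul he3 hnm (by positivity) (by norm_num)
      refine h5.trans ?_
      rw [hX3, show (3:ℝ) * (2/θ) = 6/θ by ring, div_le_div_iff₀ hθ0 (by positivity)]
      have k1 : (θ*r)^3 ≤ θ^3 := pow_le_pow_left₀ hθr0 (by nlinarith) 3
      have k2 : θ^3 ≤ θ := by nlinarith [sq_nonneg θ, mul_pos hθ0 hθ0]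
      nlinarith
    have hBle : B ≤ X^3 := by
      have h7 : (1:ℝ) ≤ 1/r := by
        rw [le_div_iff₀ hr0]; linarith
      have h8 : B ≤ 5/r := by
        rw [hB, show (5:ℝ)/r = 1/r + 4/r by ring]
        linarith
      refine h8.trans ?_
      rw [hX3, div_le_div_iff₀ hr0 (by positivity)]
      have k1 : (θ*r)^3 ≤ r^3 := pow_le_pow_left₀ hθr0 (by nlinarith) 3
      have k2 : r^3 ≤ r := by nlinarith [sq_nonneg r, mul_pos hr0 hr0]
      nlinarith
    have hfin : (S.card : ℝ) * (B^2 * B^(2*m)) ≤ Real.exp (15 * n * θ * L) := by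
      have t1 : (S.card : ℝ) * (B^2 * B^(2*m)) ≤ (X^3)^m * ((X^3)^2 * (X^3)^(2*m)) := by
        refine mul_le_mul (hScard.trans (pow_le_pow_left₀ (by positivity) hA m)) ?_
          (by positivity) (by positivity)
        exact mul_le_mul (pow_le_pow_left₀ (by positivity) hBle 2)
          (pow_le_pow_left₀ (by positivity) hBle (2*m)) (by positivity) (by positivity)
      refine t1.trans ?_
      have t2 : (X^3)^m * ((X^3)^2 * (X^3)^(2*m)) = X^(3*m + (3*2 + 3*(2*m))) := by
        rw [← pow_mul, ← pow_mul, ← pow_mul, ← pow_add, ← pow_add]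
      rw [t2, ← hexpL, ← Real.exp_nat_mul]
      refine Real.exp_le_exp.2 ?_
      have hcast : ((3*m + (3*2 + 3*(2*m)) : ℕ) : ℝ) = 9*(m:ℝ) + 6 := by push_cast; ring
      rw [hcast]
      have h9 : 9*(m:ℝ) + 6 ≤ 15 * ((n:ℝ) * θ) := by
        have e1 : θ * (n:ℝ) = (n:ℝ) * θ := mul_comm _ _
        linarith [hmle, hθn]
      calc (9*(m:ℝ)+6) * L ≤ (15 * ((n:ℝ)*θ)) * L := mul_le_mul_of_nonneg_right h9 hL0
      _ = 15 * (n:ℝ) * θ * L := by ring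
    exact hcard1.trans hfin
end

section
/- Let x : [n]×[n] → ℝ with ∑ x_{ij} = 0 and ∑ x_{ij}² = n², let π be a uniform random permutation of [n]×[n], and X_{ij} = x_{π(i,j)}. Fix I ⊆ [n] and a unit vector u ∈ S^{n-1}_ℂ with ℓ¹-norm |u|_1 ≤ √n. Then E |X_{|I} u|² ≥ #I - (#I/(n²-1)) |u|₁² ≥ #I/3, where X_{|I} is the submatrix of rows indexed by I. -/
open Finset


lemma exists_perm_pair' {α : Type*} [DecidableEq α] {a b a' b' : α}
    (hab : a ≠ b) (h' : a' ≠ b') : ∃ τ : Equiv.Perm α, τ a = a' ∧ τ b = b' := by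
  have hne : a' ≠ Equiv.swap a a' b := fun h =>
    hab ((Equiv.swap a a').injective ((Equiv.swap_apply_left a a').trans h))
  refine ⟨(Equiv.swap a a').trans (Equiv.swap (Equiv.swap a a' b) b'), ?_, ?_⟩
  · simp only [Equiv.trans_apply, Equiv.swap_apply_left]
    exact Equiv.swap_apply_of_ne_of_ne hne h'
  · simp only [Equiv.trans_apply, Equiv.swap_apply_left]

lemma perm_sum_pair_const {α : Type*} [Fintype α] [DecidableEq α]
    (x : α → ℝ) {a b a' b' : α} (hab : a ≠ b) (h' : a' ≠ b') :
    ∑ π : Equiv.Perm α, x (π a) * x (π b) = ∑ π : Equiv.Perm α, x (π a') * x (π b') := by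
  obtain ⟨τ, ta, tb⟩ := exists_perm_pair' hab h'
  exact (Fintype.sum_equiv (Equiv.mulRight τ) _ _
    (fun π => by simp [Equiv.Perm.mul_apply, ta, tb])).symm

lemma perm_sum_diag_const {α : Type*} [Fintype α] [DecidableEq α]
    (x : α → ℝ) (a a' : α) :
    ∑ π : Equiv.Perm α, x (π a) ^ 2 = ∑ π : Equiv.Perm α, x (π a') ^ 2 :=
  (Fintype.sum_equiv (Equiv.mulRight (Equiv.swap a a')) _ _
    (fun π => by simp [Equiv.Perm.mul_apply])).symm

lemma perm_sum_diag {α : Type*} [Fintype α] [DecidableEq α] (x : α → ℝ) (a : α) :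
    (Fintype.card α : ℝ) * ∑ π : Equiv.Perm α, x (π a) ^ 2
      = (Fintype.card (Equiv.Perm α) : ℝ) * ∑ p, x p ^ 2 := by
  calc (Fintype.card α : ℝ) * ∑ π : Equiv.Perm α, x (π a) ^ 2
      = ∑ a' : α, ∑ π : Equiv.Perm α, x (π a') ^ 2 := by
        rw [Finset.sum_congr rfl (fun a' _ => perm_sum_diag_const x a' a), Finset.sum_const]
        simp [mul_comm]
    _ = ∑ π : Equiv.Perm α, ∑ a' : α, x (π a') ^ 2 := Finset.sum_comm
    _ = ∑ _π : Equiv.Perm α, ∑ p, x p ^ 2 :=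
        Finset.sum_congr rfl (fun π _ => Equiv.sum_comp π (fun p => x p ^ 2))
    _ = _ := by rw [Finset.sum_const]; simp [mul_comm]

lemma perm_sum_offdiag {α : Type*} [Fintype α] [DecidableEq α] (x : α → ℝ)
    (h0 : ∑ p, x p = 0) {a b : α} (hab : a ≠ b) :
    ((Fintype.card α : ℝ) - 1) * ∑ π : Equiv.Perm α, x (π a) * x (π b)
      = - ∑ π : Equiv.Perm α, x (π a) ^ 2 := by
  have key : ∑ b' : α, ∑ π : Equiv.Perm α, x (π a) * x (π b') = 0 := by
    rw [Finset.sum_comm]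
    refine Finset.sum_eq_zero fun π _ => ?_
    rw [← Finset.mul_sum, Equiv.sum_comp π x, h0, mul_zero]
  rw [← Finset.add_sum_erase _ _ (Finset.mem_univ a)] at key
  have h2 : ∀ b' ∈ univ.erase a, ∑ π : Equiv.Perm α, x (π a) * x (π b')
      = ∑ π : Equiv.Perm α, x (π a) * x (π b) := fun b' hb' =>
    perm_sum_pair_const x (Ne.symm (Finset.ne_of_mem_erase hb')) hab
  rw [Finset.sum_congr rfl h2, Finset.sum_const, Finset.card_erase_of_mem (Finset.mem_univ a),
    Finset.card_univ] at key
  have hpos : 1 ≤ Fintype.card α := Fintype.card_pos_iff.mpr ⟨a⟩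
  have : ∑ π : Equiv.Perm α, x (π a) * x (π a) = ∑ π : Equiv.Perm α, x (π a) ^ 2 := by
    refine Finset.sum_congr rfl fun π _ => by ring
  rw [this] at key
  have hc : ((Fintype.card α - 1 : ℕ) : ℝ) = (Fintype.card α : ℝ) - 1 := by
    push_cast [Nat.cast_sub hpos]; ring
  rw [nsmul_eq_mul, hc] at key
  linarith

/-- Second moment lower bound for the image of a unit vector with small ℓ¹-norm under a
submatrix of rows of the shuffled matrix: `E |X_{|I} u|² ≥ #I - (#I/(n²-1)) |u|₁² ≥ #I/3`. -/
theorem shuffled_submatrix_second_moment (n : ℕ) (hn : 2 ≤ n)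
    (x : Fin n × Fin n → ℝ)
    (h0 : ∑ p : Fin n × Fin n, x p = 0)
    (h2 : ∑ p : Fin n × Fin n, (x p) ^ 2 = (n : ℝ) ^ 2)
    (I : Finset (Fin n)) (u : Fin n → ℂ)
    (hu : ∑ j, ‖u j‖ ^ 2 = 1) (hu1 : ∑ j, ‖u j‖ ≤ Real.sqrt n) :
    (I.card : ℝ) - ((I.card : ℝ) / ((n : ℝ) ^ 2 - 1)) * (∑ j, ‖u j‖) ^ 2 ≤
      (∑ π : Equiv.Perm (Fin n × Fin n), ∑ i ∈ I, ‖∑ j, ((x (π (i, j)) : ℝ) : ℂ) * u j‖ ^ 2) /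
        (Fintype.card (Equiv.Perm (Fin n × Fin n)) : ℝ) ∧
    (I.card : ℝ) / 3 ≤
      (I.card : ℝ) - ((I.card : ℝ) / ((n : ℝ) ^ 2 - 1)) * (∑ j, ‖u j‖) ^ 2 := by
  have hn' : (2:ℝ) ≤ (n:ℝ) := by exact_mod_cast hn
  set L : ℝ := ∑ j, ‖u j‖ with hLdef
  have hL0 : 0 ≤ L := Finset.sum_nonneg fun j _ => norm_nonneg _
  have hLn : L ^ 2 ≤ (n : ℝ) := by
    have := Real.sq_sqrt (by positivity : (0:ℝ) ≤ (n:ℝ))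
    nlinarith [Real.sqrt_nonneg (n:ℝ)]
  set NN : ℝ := (n:ℝ)^2 - 1 with hNNdef
  have hNN3 : 3 ≤ NN := by nlinarith
  have hNNpos : 0 < NN := by linarith
  set K : ℝ := (Fintype.card (Equiv.Perm (Fin n × Fin n)) : ℝ) with hKdef
  have hKpos : 0 < K := by
    rw [hKdef]
    exact_mod_cast (Fintype.card_pos : 0 < Fintype.card (Equiv.Perm (Fin n × Fin n)))
  have hI0 : (0:ℝ) ≤ (I.card : ℝ) := by positivity
  have hcard : (Fintype.card (Fin n × Fin n) : ℝ) = (n:ℝ)^2 := by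
    rw [Fintype.card_prod, Fintype.card_fin]; push_cast; ring
  -- diagonal value
  have hD : ∀ a : Fin n × Fin n, ∑ π : Equiv.Perm (Fin n × Fin n), x (π a) ^ 2 = K := by
    intro a
    have := perm_sum_diag x a
    rw [hcard, h2] at this
    have hne : ((n:ℝ)^2) ≠ 0 := by nlinarith
    exact mul_left_cancel₀ hne (this.trans (mul_comm _ _))
  -- off-diagonal value
  have hO : ∀ a b : Fin n × Fin n, a ≠ b →
      ∑ π : Equiv.Perm (Fin n × Fin n), x (π a) * x (π b) = -K / NN := by
    intro a b hab
    have := perm_sum_offdiag x h0 hab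
    rw [hcard, hD a] at this
    rw [← hNNdef] at this
    rw [eq_div_iff (ne_of_gt hNNpos)]
    linarith [this]
  set w : Fin n → Fin n → ℝ := fun j k => (u j).re * (u k).re + (u j).im * (u k).im with hwdef
  have hnormsq : ∀ (c : Fin n → ℝ), ‖∑ j, (c j : ℂ) * u j‖ ^ 2
      = ∑ j, ∑ k, (c j * c k) * w j k := by
    intro c
    have hre : (∑ j, (c j:ℂ) * u j).re = ∑ j, c j * (u j).re := by
      rw [Complex.re_sum]
      exact Finset.sum_congr rfl fun j _ => by simp [Complex.mul_re]
    have him : (∑ j, (c j:ℂ) * u j).im = ∑ j, c j * (u j).im := by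
      rw [Complex.im_sum]
      exact Finset.sum_congr rfl fun j _ => by simp [Complex.mul_im]
    rw [Complex.sq_norm, Complex.normSq_apply, hre, him,
      Finset.sum_mul_sum, Finset.sum_mul_sum, ← Finset.sum_add_distrib]
    refine Finset.sum_congr rfl fun j _ => ?_
    rw [← Finset.sum_add_distrib]
    refine Finset.sum_congr rfl fun k _ => ?_
    simp only [hwdef]; ring
  have hEjk : ∀ (i : Fin n) (j k : Fin n),
      (∑ π : Equiv.Perm (Fin n × Fin n), x (π (i,j)) * x (π (i,k)))
        = if j = k then K else -K / NN := by
    intro i j k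
    by_cases h : j = k
    · subst h; rw [if_pos rfl, ← hD (i,j)]
      exact Finset.sum_congr rfl fun π _ => by ring
    · rw [if_neg h]
      exact hO (i,j) (i,k) (fun hc => h (congrArg Prod.snd hc))
  set W : ℝ := (∑ j, (u j).re)^2 + (∑ j, (u j).im)^2 with hWdef
  have hWw : ∑ j, ∑ k, w j k = W := by
    rw [hWdef, pow_two, pow_two, Finset.sum_mul_sum, Finset.sum_mul_sum,
      ← Finset.sum_add_distrib]
    exact Finset.sum_congr rfl fun j _ => Finset.sum_add_distrib
  have hdiagw : ∑ j, w j j = 1 := by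
    rw [← hu]
    refine Finset.sum_congr rfl fun j _ => ?_
    rw [Complex.sq_norm, Complex.normSq_apply]
  have hWle : W ≤ L^2 := by
    have h1 : W = ‖∑ j, u j‖^2 := by
      rw [Complex.sq_norm, Complex.normSq_apply, Complex.re_sum,
        Complex.im_sum, hWdef]
      ring
    rw [h1, hLdef]
    exact pow_le_pow_left₀ (norm_nonneg _) (norm_sum_le _ _) 2
  -- main computation
  have hS : ∑ π : Equiv.Perm (Fin n × Fin n), ∑ i ∈ I, ‖∑ j, ((x (π (i, j)) : ℝ) : ℂ) * u j‖ ^ 2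
      = (I.card : ℝ) * ((-K/NN) * W + (K - (-K/NN))) := by
    have hj : ∀ j : Fin n, ∑ k, (if j = k then K else -K/NN) * w j k
        = (-K/NN) * (∑ k, w j k) + (K - (-K/NN)) * w j j := by
      intro j
      have hsplit : ∀ k : Fin n, (if j = k then K else -K/NN) * w j k
          = (-K/NN) * w j k + (if j = k then (K - (-K/NN)) * w j k else 0) := by
        intro k; by_cases h : j = k
        · rw [if_pos h, if_pos h]; ring
        · rw [if_neg h, if_neg h]; ring
      rw [Finset.sum_congr rfl fun k _ => hsplit k, Finset.sum_add_distrib,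
        ← Finset.mul_sum, Finset.sum_ite_eq]
      simp
    calc ∑ π : Equiv.Perm (Fin n × Fin n), ∑ i ∈ I, ‖∑ j, ((x (π (i, j)) : ℝ) : ℂ) * u j‖ ^ 2
        = ∑ π : Equiv.Perm (Fin n × Fin n), ∑ i ∈ I,
            ∑ j, ∑ k, (x (π (i,j)) * x (π (i,k))) * w j k :=
          Finset.sum_congr rfl fun π _ => Finset.sum_congr rfl fun i _ =>
            hnormsq (fun j => x (π (i, j)))
      _ = ∑ i ∈ I, ∑ j, ∑ k,
            (∑ π : Equiv.Perm (Fin n × Fin n), x (π (i,j)) * x (π (i,k))) * w j k := by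
          rw [Finset.sum_comm]
          refine Finset.sum_congr rfl fun i _ => ?_
          rw [Finset.sum_comm]
          refine Finset.sum_congr rfl fun j _ => ?_
          rw [Finset.sum_comm]
          exact Finset.sum_congr rfl fun k _ => (Finset.sum_mul _ _ _).symm
      _ = ∑ _i ∈ I, ((-K/NN) * W + (K - (-K/NN))) := by
          refine Finset.sum_congr rfl fun i _ => ?_
          calc ∑ j, ∑ k, (∑ π : Equiv.Perm (Fin n × Fin n), x (π (i,j)) * x (π (i,k))) * w j k
              = ∑ j, ((-K/NN) * (∑ k, w j k) + (K - (-K/NN)) * w j j) := by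
                refine Finset.sum_congr rfl fun j _ => ?_
                rw [← hj j]
                exact Finset.sum_congr rfl fun k _ => by rw [hEjk]
            _ = (-K/NN) * (∑ j, ∑ k, w j k) + (K - (-K/NN)) * (∑ j, w j j) := by
                rw [Finset.sum_add_distrib, ← Finset.mul_sum, ← Finset.mul_sum]
            _ = (-K/NN) * W + (K - (-K/NN)) := by rw [hWw, hdiagw, mul_one]
      _ = (I.card : ℝ) * ((-K/NN) * W + (K - (-K/NN))) := by
          rw [Finset.sum_const, nsmul_eq_mul]
  constructor
  · rw [hS]
    have hSdivK : (I.card : ℝ) * ((-K/NN) * W + (K - (-K/NN))) / K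
        = (I.card : ℝ) - (I.card : ℝ) * (W - 1) / NN := by
      field_simp
      ring
    rw [hSdivK]
    have h1 : (I.card : ℝ) * (W - 1) ≤ (I.card : ℝ) * L^2 :=
      mul_le_mul_of_nonneg_left (by linarith) hI0
    have h2 : (I.card : ℝ) * (W - 1) / NN ≤ (I.card : ℝ) * L^2 / NN :=
      div_le_div_of_nonneg_right h1 hNNpos.le
    rw [div_mul_eq_mul_div]
    linarith
  · have key : ((I.card : ℝ) * L^2)/NN ≤ 2/3 * (I.card : ℝ) := by
      rw [div_le_iff₀ hNNpos]
      have h1 : (I.card : ℝ) * L^2 ≤ (I.card : ℝ) * (n:ℝ) := mul_le_mul_of_nonneg_left hLn hI0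
      have hq : (0:ℝ) ≤ 2*(n:ℝ)^2 - 3*(n:ℝ) - 2 := by nlinarith
      have h3 : (n:ℝ) ≤ 2/3 * NN := by rw [hNNdef]; linarith
      have h4 : (I.card : ℝ) * (n:ℝ) ≤ (I.card : ℝ) * (2/3 * NN) :=
        mul_le_mul_of_nonneg_left h3 hI0
      linarith
    rw [div_mul_eq_mul_div]
    linarith
end

section
/- Let s_1 ≥ ... ≥ s_n > 0 be positive reals, let γ ∈ (0,1), β > 0, and suppose s_n ≥ n^{-β}, s_{n-i} ≥ c i/n for all n^γ ≤ i ≤ n-1, and (1/n)∑_i s_i² ≤ D. Then for α > 0 small enough (depending only on β, γ) there is a constant C (depending on α, c, D) such that (1/n) ∑_{i=1}^n (s_i^α + s_i^{-α}) ≤ C, where C can be taken as D^{α/2} + n^{βα + γ - 1} + C_α. -/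
open Finset

lemma sum_rpow_neg_le {α : ℝ} (hα0 : 0 < α) (hα1 : α < 1) (n : ℕ) :
    ∑ k ∈ Finset.Icc 1 n, (k : ℝ) ^ (-α) ≤ (n : ℝ) ^ (1 - α) / (1 - α) := by
  induction n with
  | zero => simp [Real.zero_rpow (by linarith : (1:ℝ) - α ≠ 0)]
  | succ n ih =>
    rw [Finset.sum_Icc_succ_top (by omega : 1 ≤ n + 1)]
    have hN : (0:ℝ) < (n:ℝ) + 1 := by positivity
    have key : ((n:ℝ)) ^ (1 - α) + (1 - α) * ((n:ℝ)+1) ^ (-α) ≤ ((n:ℝ)+1) ^ (1 - α) := by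
      have hb : (1 - 1/((n:ℝ)+1)) ^ (1-α) ≤ 1 + (1-α) * (-(1/((n:ℝ)+1))) := by
        have := rpow_one_add_le_one_add_mul_self
          (s := -(1/((n:ℝ)+1))) (p := 1 - α)
          (by rw [neg_le, neg_neg]; rw [div_le_one hN]; linarith)
          (by linarith) (by linarith)
        simpa [sub_eq_add_neg] using this
      have hmul : ((n:ℝ)+1) ^ (1-α) * (1 - 1/((n:ℝ)+1)) ^ (1-α)
          ≤ ((n:ℝ)+1) ^ (1-α) * (1 + (1-α) * (-(1/((n:ℝ)+1)))) :=
        mul_le_mul_of_nonneg_left hb (Real.rpow_nonneg hN.le _)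
      have heq1 : ((n:ℝ)+1) ^ (1-α) * (1 - 1/((n:ℝ)+1)) ^ (1-α) = (n:ℝ) ^ (1-α) := by
        rw [← Real.mul_rpow hN.le (by rw [sub_nonneg, div_le_one hN]; linarith)]
        congr 1
        field_simp
        ring
      have heq2 : ((n:ℝ)+1) ^ (1-α) * (1/((n:ℝ)+1)) = ((n:ℝ)+1) ^ (-α) := by
        rw [one_div, ← Real.rpow_neg_one ((n:ℝ)+1), ← Real.rpow_add hN]
        congr 1; ring
      nlinarith [hmul, heq1, heq2]
    have h1 : ((n+1:ℕ):ℝ) = (n:ℝ) + 1 := by push_cast; ring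
    have ih' : (∑ k ∈ Finset.Icc 1 n, (k : ℝ) ^ (-α)) * (1 - α) ≤ (n:ℝ) ^ (1 - α) := by
      rw [← le_div_iff₀ (by linarith : (0:ℝ) < 1 - α)]; exact ih
    rw [h1, le_div_iff₀ (by linarith : (0:ℝ) < 1 - α), add_mul]
    nlinarith [key, ih']

/-- Deterministic uniform-integrability estimate for singular values: if `s_1 ≥ ... ≥ s_n > 0`
with `s_n ≥ n^{-β}`, `s_{n-i} ≥ c i/n` for `n^γ ≤ i ≤ n-1`, and `(1/n) ∑ s_i² ≤ D`, then for
`α > 0` small enough, `(1/n) ∑ (s_i^α + s_i^{-α}) ≤ D^{α/2} + n^{βα+γ-1} + C_α`. -/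
theorem uniform_integrability_bound (γ β c D : ℝ)
    (hγ : γ ∈ Set.Ioo (0 : ℝ) 1) (hβ : 0 < β) (hc : 0 < c) (hD : 0 < D) :
    ∀ α : ℝ, 0 < α → α < 1 → β * α + γ < 1 →
      ∃ C : ℝ, 0 < C ∧
        ∀ (n : ℕ), 2 ≤ n → ∀ s : ℕ → ℝ,
          (∀ i ∈ Finset.Icc 1 n, 0 < s i) →
          (∀ i ∈ Finset.Icc 1 n, ∀ j ∈ Finset.Icc 1 n, i ≤ j → s j ≤ s i) →
          (n : ℝ) ^ (-β) ≤ s n →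
          (∀ i : ℕ, (n : ℝ) ^ γ ≤ (i : ℝ) → i ≤ n - 1 → c * (i : ℝ) / (n : ℝ) ≤ s (n - i)) →
          (1 / (n : ℝ)) * ∑ i ∈ Finset.Icc 1 n, (s i) ^ 2 ≤ D →
          (1 / (n : ℝ)) * ∑ i ∈ Finset.Icc 1 n, ((s i) ^ α + (s i) ^ (-α)) ≤
            D ^ (α / 2) + (n : ℝ) ^ (β * α + γ - 1) + C := by
  obtain ⟨hγ0, hγ1⟩ := hγ
  intro α hα0 hα1 hexp
  have hcα : (0:ℝ) < c ^ (-α) / (1 - α) :=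
    div_pos (Real.rpow_pos_of_pos hc _) (by linarith : (0:ℝ) < 1 - α)
  refine ⟨3 + D + c ^ (-α) / (1 - α), by linarith, ?_⟩
  intro n hn s hpos hmono hsn hlow hsum
  have hn1 : 1 ≤ n := by omega
  have hnR : (0:ℝ) < n := by exact_mod_cast (by omega : 0 < n)
  have hnR1 : (1:ℝ) ≤ n := by exact_mod_cast hn1
  have hnmem : n ∈ Finset.Icc 1 n := by simp [hn1]
  -- Part 1 : sum of s i ^ α
  have hS2 : ∑ i ∈ Finset.Icc 1 n, s i ^ 2 ≤ (n:ℝ) * D := by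
    have h := mul_le_mul_of_nonneg_left hsum hnR.le
    calc ∑ i ∈ Finset.Icc 1 n, s i ^ 2
        = (n:ℝ) * ((1/(n:ℝ)) * ∑ i ∈ Finset.Icc 1 n, s i ^ 2) := by
          field_simp
      _ ≤ (n:ℝ) * D := h
  have hpart1 : ∑ i ∈ Finset.Icc 1 n, s i ^ α ≤ (n:ℝ) * (1 + D) := by
    calc ∑ i ∈ Finset.Icc 1 n, s i ^ α ≤ ∑ i ∈ Finset.Icc 1 n, (1 + s i ^ 2) := by
          apply Finset.sum_le_sum
          intro i hi
          have hsi := hpos i hi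
          rcases le_total (s i) 1 with h | h
          · have h2 : s i ^ α ≤ 1 := Real.rpow_le_one hsi.le h hα0.le
            nlinarith [sq_nonneg (s i)]
          · have h2 : s i ^ α ≤ s i ^ (2:ℝ) :=
              Real.rpow_le_rpow_of_exponent_le h (by linarith)
            rw [show (2:ℝ) = ((2:ℕ):ℝ) by norm_num, Real.rpow_natCast] at h2
            linarith
      _ = (n:ℝ) + ∑ i ∈ Finset.Icc 1 n, s i ^ 2 := by
          rw [Finset.sum_add_distrib, Finset.sum_const, Nat.card_Icc]
          simp [nsmul_eq_mul]
      _ ≤ (n:ℝ) * (1 + D) := by nlinarith [hS2]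
  -- Part 2 : sum of s i ^ (-α)
  set m := ⌈(n:ℝ)^γ⌉₊ with hm
  have hγpos : (0:ℝ) < (n:ℝ)^γ := Real.rpow_pos_of_pos hnR _
  have hm1 : 1 ≤ m := Nat.one_le_ceil_iff.mpr hγpos
  have hmn : m ≤ n := by
    apply Nat.ceil_le.mpr
    calc (n:ℝ)^γ ≤ (n:ℝ)^(1:ℝ) := Real.rpow_le_rpow_of_exponent_le hnR1 hγ1.le
      _ = n := Real.rpow_one _
  have hmγ : (n:ℝ)^γ ≤ m := Nat.le_ceil _
  have hγ1' : (1:ℝ) ≤ (n:ℝ)^γ := by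
    calc (1:ℝ) = (1:ℝ)^γ := (Real.one_rpow _).symm
      _ ≤ (n:ℝ)^γ := Real.rpow_le_rpow (by norm_num) hnR1 hγ0.le
  have hmub : (m:ℝ) ≤ 2 * (n:ℝ)^γ := by
    have h1 : (m:ℝ) < (n:ℝ)^γ + 1 := Nat.ceil_lt_add_one hγpos.le
    linarith
  have hIcc : Finset.Icc 1 n = Finset.Ioc 0 n := by rw [← Finset.Icc_add_one_left_eq_Ioc]; rfl
  have hsplit : ∑ i ∈ Finset.Icc 1 n, s i ^ (-α)
      = ∑ i ∈ Finset.Ioc 0 (n - m), s i ^ (-α)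
        + ∑ i ∈ Finset.Ioc (n - m) n, s i ^ (-α) := by
    rw [hIcc, Finset.sum_Ioc_consecutive _ (Nat.zero_le _) (Nat.sub_le n m)]
  -- top piece
  have htop : ∑ i ∈ Finset.Ioc (n - m) n, s i ^ (-α) ≤ 2 * (n:ℝ) := by
    have hb : ∀ i ∈ Finset.Ioc (n - m) n, s i ^ (-α) ≤ (n:ℝ)^(β*α) := by
      intro i hi
      simp only [Finset.mem_Ioc] at hi
      have hiI : i ∈ Finset.Icc 1 n := by simp only [Finset.mem_Icc]; omega
      have h1 : s n ≤ s i := hmono i hiI n hnmem hi.2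
      have h2 : (n:ℝ)^(-β) ≤ s i := le_trans hsn h1
      have h3 : s i ^ (-α) ≤ ((n:ℝ)^(-β)) ^ (-α) :=
        Real.rpow_le_rpow_of_nonpos (Real.rpow_pos_of_pos hnR _) h2 (by linarith)
      calc s i ^ (-α) ≤ ((n:ℝ)^(-β)) ^ (-α) := h3
        _ = (n:ℝ)^(β*α) := by
            rw [← Real.rpow_mul hnR.le]
            congr 1; ring
    calc ∑ i ∈ Finset.Ioc (n - m) n, s i ^ (-α)
        ≤ ∑ _i ∈ Finset.Ioc (n - m) n, (n:ℝ)^(β*α) := Finset.sum_le_sum hb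
      _ = (m:ℝ) * (n:ℝ)^(β*α) := by
          rw [Finset.sum_const, Nat.card_Ioc, nsmul_eq_mul]
          congr 2
          omega
      _ ≤ (2 * (n:ℝ)^γ) * (n:ℝ)^(β*α) :=
          mul_le_mul_of_nonneg_right hmub (Real.rpow_nonneg hnR.le _)
      _ = 2 * (n:ℝ)^(γ + β*α) := by rw [Real.rpow_add hnR]; ring
      _ ≤ 2 * (n:ℝ) := by
          have := Real.rpow_le_rpow_of_exponent_le hnR1 (by linarith : γ + β*α ≤ 1)
          rw [Real.rpow_one] at this
          linarith
  -- bottom piece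
  have hbot : ∑ i ∈ Finset.Ioc 0 (n - m), s i ^ (-α)
      ≤ c^(-α) * (n:ℝ)^α * ((n:ℝ)^(1-α)/(1-α)) := by
    have hb : ∀ i ∈ Finset.Ioc 0 (n - m),
        s i ^ (-α) ≤ c^(-α) * (n:ℝ)^α * (((n - i : ℕ)):ℝ)^(-α) := by
      intro i hi
      simp only [Finset.mem_Ioc] at hi
      obtain ⟨hi0, hinm⟩ := hi
      have hkpos : (0:ℝ) < ((n - i : ℕ):ℝ) := by
        have : 0 < n - i := by omega
        exact_mod_cast this
      have hkγ : (n:ℝ)^γ ≤ ((n - i : ℕ):ℝ) := by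
        refine le_trans hmγ ?_
        exact_mod_cast (by omega : m ≤ n - i)
      have h1 := hlow (n - i) hkγ (by omega : n - i ≤ n - 1)
      rw [show n - (n - i) = i by omega] at h1
      have hcpos : (0:ℝ) < c * ((n - i : ℕ):ℝ) / n := by positivity
      have h2 : s i ^ (-α) ≤ (c * ((n - i : ℕ):ℝ) / n) ^ (-α) :=
        Real.rpow_le_rpow_of_nonpos hcpos h1 (by linarith)
      have h3 : (c * ((n - i : ℕ):ℝ) / n) ^ (-α)
          = c^(-α) * (n:ℝ)^α * (((n - i : ℕ)):ℝ)^(-α) := by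
        rw [mul_div_assoc, Real.mul_rpow hc.le (by positivity),
          Real.div_rpow hkpos.le hnR.le, Real.rpow_neg hnR.le α, div_eq_mul_inv, inv_inv]
        ring
      rw [h3] at h2
      exact h2
    have hre : ∑ i ∈ Finset.Ioc 0 (n - m), (((n - i : ℕ)):ℝ)^(-α)
        ≤ ∑ k ∈ Finset.Icc 1 n, (k:ℝ)^(-α) := by
      have heq : ∑ i ∈ Finset.Ioc 0 (n - m), (((n - i : ℕ)):ℝ)^(-α)
          = ∑ k ∈ Finset.Icc m (n - 1), (k:ℝ)^(-α) := by
        apply Finset.sum_nbij' (i := fun i => n - i) (j := fun k => n - k)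
        · intro a ha; simp only [Finset.mem_Ioc] at ha; simp only [Finset.mem_Icc]; omega
        · intro a ha; simp only [Finset.mem_Icc] at ha; simp only [Finset.mem_Ioc]; omega
        · intro a ha; simp only [Finset.mem_Ioc] at ha; omega
        · intro a ha; simp only [Finset.mem_Icc] at ha; omega
        · intro a _; rfl
      rw [heq]
      apply Finset.sum_le_sum_of_subset_of_nonneg
      · intro k hk
        simp only [Finset.mem_Icc] at hk ⊢
        omega
      · intro k _ _
        positivity
    calc ∑ i ∈ Finset.Ioc 0 (n - m), s i ^ (-α)
        ≤ ∑ i ∈ Finset.Ioc 0 (n - m), c^(-α) * (n:ℝ)^α * (((n - i : ℕ)):ℝ)^(-α) :=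
          Finset.sum_le_sum hb
      _ = c^(-α) * (n:ℝ)^α * ∑ i ∈ Finset.Ioc 0 (n - m), (((n - i : ℕ)):ℝ)^(-α) := by
          rw [Finset.mul_sum]
      _ ≤ c^(-α) * (n:ℝ)^α * ∑ k ∈ Finset.Icc 1 n, (k:ℝ)^(-α) := by
          apply mul_le_mul_of_nonneg_left hre
          positivity
      _ ≤ c^(-α) * (n:ℝ)^α * ((n:ℝ)^(1-α)/(1-α)) := by
          apply mul_le_mul_of_nonneg_left (sum_rpow_neg_le hα0 hα1 n)
          positivity
  -- combine
  have hpow : (n:ℝ)^α * (n:ℝ)^(1-α) = (n:ℝ) := by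
    rw [← Real.rpow_add hnR]
    norm_num
  have hpart2 : ∑ i ∈ Finset.Icc 1 n, s i ^ (-α)
      ≤ (n:ℝ) * (2 + c^(-α)/(1-α)) := by
    rw [hsplit]
    have h4 : c^(-α) * (n:ℝ)^α * ((n:ℝ)^(1-α)/(1-α)) = (n:ℝ) * (c^(-α)/(1-α)) := by
      rw [show c^(-α) * (n:ℝ)^α * ((n:ℝ)^(1-α)/(1-α))
          = c^(-α) * ((n:ℝ)^α * (n:ℝ)^(1-α))/(1-α) by ring, hpow]
      ring
    rw [h4] at hbot
    have hexpand : (n:ℝ) * (2 + c^(-α)/(1-α)) = 2*(n:ℝ) + (n:ℝ) * (c^(-α)/(1-α)) := by ring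
    rw [hexpand]
    linarith [htop, hbot]
  have hT : ∑ i ∈ Finset.Icc 1 n, ((s i) ^ α + (s i) ^ (-α))
      ≤ (n:ℝ) * (3 + D + c^(-α)/(1-α)) := by
    rw [Finset.sum_add_distrib]
    have : (n:ℝ) * (3 + D + c^(-α)/(1-α))
        = (n:ℝ) * (1 + D) + (n:ℝ) * (2 + c^(-α)/(1-α)) := by ring
    rw [this]
    exact add_le_add hpart1 hpart2
  have hfin : (1/(n:ℝ)) * ∑ i ∈ Finset.Icc 1 n, ((s i) ^ α + (s i) ^ (-α))
      ≤ 3 + D + c^(-α)/(1-α) := by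
    have h := mul_le_mul_of_nonneg_left hT (by positivity : (0:ℝ) ≤ 1/(n:ℝ))
    calc (1/(n:ℝ)) * ∑ i ∈ Finset.Icc 1 n, ((s i) ^ α + (s i) ^ (-α))
        ≤ (1/(n:ℝ)) * ((n:ℝ) * (3 + D + c^(-α)/(1-α))) := h
      _ = 3 + D + c^(-α)/(1-α) := by field_simp
  have h1 : (0:ℝ) < D ^ (α/2) := Real.rpow_pos_of_pos hD _
  have h2 : (0:ℝ) < (n:ℝ)^(β*α+γ-1) := Real.rpow_pos_of_pos hnR _
  linarith
end
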